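/- (Optimal cooling population: Ky Fan–type characterisation.) Let ρ_S and ρ_M be density matrices on ℂ^{d_S} and ℂ^{d_M}, and let P := |e_0⟩⟨e_0| ⊗ I_{d_M} be the projector onto the ground-level subspace of the first factor (e_0 the first standard basis vector). Then the maximum over unitaries U on ℂ^{d_S} ⊗ ℂ^{d_M} of Tr[P · U (ρ_S ⊗ ρ_M) U†] is attained and equals the sum of the d_M largest eigenvalues (counted with multiplicity) of ρ_S ⊗ ρ_M. -/

import Mathlib

open scoped Kronecker ComplexOrder
open Matrix

/-- Eigenvalues of a matrix (junk value `0` if the matrix is not Hermitian). -/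
noncomputable def eigsOf {n : Type*} [Fintype n] [DecidableEq n] (A : Matrix n n ℂ) : n → ℝ :=
  if h : A.IsHermitian then h.eigenvalues else 0

/-- The sum of the `m` largest eigenvalues (with multiplicity) of a matrix: sort the
multiset of eigenvalues in nonincreasing order and sum the first `m` entries. -/
noncomputable def sumLargestEigs {n : Type*} [Fintype n] [DecidableEq n]
    (A : Matrix n n ℂ) (m : ℕ) : ℝ :=
  (((Multiset.map (eigsOf A) Finset.univ.val).sort (· ≤ ·)).reverse.take m).sum

lemma kron_herm {dS dM : ℕ} {A : Matrix (Fin dS) (Fin dS) ℂ} {B : Matrix (Fin dM) (Fin dM) ℂ}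
    (hA : A.IsHermitian) (hB : B.IsHermitian) : (A ⊗ₖ B).IsHermitian := by
  unfold Matrix.IsHermitian
  ext ⟨a, b⟩ ⟨c, d⟩
  simp only [conjTranspose_apply, kroneckerMap_apply, star_mul']
  rw [hA.apply, hB.apply, mul_comm]

lemma trace_proj {dS dM : ℕ} [NeZero dS] (M : Matrix (Fin dS × Fin dM) (Fin dS × Fin dM) ℂ) :
    Matrix.trace ((Matrix.single (0 : Fin dS) (0 : Fin dS) (1 : ℂ)
        ⊗ₖ (1 : Matrix (Fin dM) (Fin dM) ℂ)) * M)
      = ∑ b : Fin dM, M (0, b) (0, b) := by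
  simp [Matrix.trace, Matrix.diag, Matrix.mul_apply, Matrix.kroneckerMap_apply,
    Matrix.single, Matrix.one_apply, Fintype.sum_prod_type, ite_and,
    Finset.sum_ite_eq, Finset.sum_ite_eq']

lemma filter_lt_eq_map {N m : ℕ} (hmN : m ≤ N) :
    Finset.univ.filter (fun i : Fin N => (i : ℕ) < m)
      = Finset.univ.map (Fin.castLEEmb hmN) := by
  ext j
  simp only [Finset.mem_filter, Finset.mem_univ, true_and, Finset.mem_map,
    Fin.coe_castLEEmb]
  constructor
  · intro h
    exact ⟨⟨j, h⟩, Fin.ext rfl⟩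
  · rintro ⟨b, rfl⟩
    exact b.2

lemma kyfan_bound {N m : ℕ} (hm : 0 < m) (hmN : m ≤ N) (v : Fin N → ℝ) (hv : Antitone v)
    (c : Fin N → ℝ) (hc0 : ∀ i, 0 ≤ c i) (hc1 : ∀ i, c i ≤ 1)
    (hcs : ∑ i, c i = m) :
    ∑ i, v i * c i ≤ ∑ i ∈ Finset.univ.filter (fun i : Fin N => (i : ℕ) < m), v i := by
  classical
  set T := Finset.univ.filter (fun i : Fin N => (i : ℕ) < m) with hT
  have hTcard : T.card = m := by
    rw [hT, filter_lt_eq_map hmN, Finset.card_map, Finset.card_univ, Fintype.card_fin]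
  set t : ℝ := v ⟨m - 1, by omega⟩ with ht
  have hsplitc : ∑ i ∈ T, c i + ∑ i ∈ Finset.univ.filter (fun i : Fin N => ¬ (i : ℕ) < m), c i
      = (m : ℝ) := by
    rw [hT, Finset.sum_filter_add_sum_filter_not]; exact hcs
  have h₁ : ∑ i ∈ T, v i * c i ≤ ∑ i ∈ T, (v i + t * (c i - 1)) := by
    refine Finset.sum_le_sum fun i hi => ?_
    have hiv : t ≤ v i := by
      refine hv ?_
      have : (i : ℕ) < m := (Finset.mem_filter.mp hi).2
      rw [Fin.le_def]; simp; omega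
    have h2 : c i - 1 ≤ 0 := by linarith [hc1 i]
    nlinarith [mul_le_mul_of_nonpos_right hiv h2]
  have h₂ : ∑ i ∈ Finset.univ.filter (fun i : Fin N => ¬ (i : ℕ) < m), v i * c i
      ≤ ∑ i ∈ Finset.univ.filter (fun i : Fin N => ¬ (i : ℕ) < m), t * c i := by
    refine Finset.sum_le_sum fun i hi => ?_
    have hiv : v i ≤ t := by
      refine hv ?_
      have : ¬ (i : ℕ) < m := (Finset.mem_filter.mp hi).2
      rw [Fin.le_def]; simp; omega
    exact mul_le_mul_of_nonneg_right hiv (hc0 i)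
  have hsum : ∑ i, v i * c i
      = ∑ i ∈ T, v i * c i + ∑ i ∈ Finset.univ.filter (fun i : Fin N => ¬ (i : ℕ) < m), v i * c i := by
    rw [hT, Finset.sum_filter_add_sum_filter_not]
  have hexp : ∑ i ∈ T, (v i + t * (c i - 1)) = ∑ i ∈ T, v i + t * (∑ i ∈ T, c i) - t * m := by
    rw [Finset.sum_add_distrib]
    simp only [mul_sub, mul_one, Finset.sum_sub_distrib, ← Finset.mul_sum, Finset.sum_const,
      hTcard, nsmul_eq_mul]
    ring
  have hexp2 : ∑ i ∈ Finset.univ.filter (fun i : Fin N => ¬ (i : ℕ) < m), t * c i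
      = t * ∑ i ∈ Finset.univ.filter (fun i : Fin N => ¬ (i : ℕ) < m), c i := by
    rw [Finset.mul_sum]
  have hmul : t * (∑ i ∈ T, c i) + t * (∑ i ∈ Finset.univ.filter (fun i : Fin N => ¬ (i : ℕ) < m), c i)
      = t * m := by rw [← mul_add, hsplitc]
  linarith [h₁, h₂, hsum, hexp, hexp2, hmul]

lemma sorted_take {N : ℕ} (v : Fin N → ℝ) (hv : Antitone v) (m : ℕ) :
    (((Multiset.map v Finset.univ.val).sort (· ≤ ·)).reverse.take m).sum
      = ∑ j ∈ Finset.univ.filter (fun j : Fin N => (j : ℕ) < m), v j := by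
  classical
  haveI : IsAntisymm ℝ (fun a b : ℝ => b ≤ a) := ⟨fun a b h h' => le_antisymm h' h⟩
  have hcoe : (↑(List.ofFn v) : Multiset ℝ) = Multiset.map v Finset.univ.val := by
    rw [List.ofFn_eq_map, ← Multiset.map_coe, Fin.univ_def]
  have hsorted : List.Pairwise (· ≤ ·) ((Multiset.map v Finset.univ.val).sort (· ≤ ·)) :=
    Multiset.pairwise_sort _ _
  have h1 : ((Multiset.map v Finset.univ.val).sort (· ≤ ·)).reverse = List.ofFn v := by
    refine (fun hp h1 h2 => List.Perm.eq_of_pairwise' (r := fun a b : ℝ => b ≤ a) h1 h2 hp) ?_ ?_ ?_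
    · refine Multiset.coe_eq_coe.mp ?_
      rw [Multiset.coe_reverse, Multiset.sort_eq, hcoe]
    · exact List.pairwise_reverse.mpr hsorted
    · rw [List.pairwise_ofFn]
      intro i j hij
      exact hv hij.le
  rw [h1]
  exact List.sum_take_ofFn v m

/-- Optimal cooling population: Ky Fan–type characterisation: the maximal
ground-level population `Tr[P U (ρ_S ⊗ ρ_M) U†]` over all unitaries `U` is attained and
equals the sum of the `d_M` largest eigenvalues of `ρ_S ⊗ ρ_M`. -/
theorem optimal_cooling_kyfan (dS dM : ℕ) [NeZero dS] [NeZero dM]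
    (ρS : Matrix (Fin dS) (Fin dS) ℂ) (hρS : ρS.PosSemidef) (hρStr : ρS.trace = 1)
    (ρM : Matrix (Fin dM) (Fin dM) ℂ) (hρM : ρM.PosSemidef) (hρMtr : ρM.trace = 1) :
    IsGreatest
      {t : ℝ | ∃ U ∈ Matrix.unitaryGroup (Fin dS × Fin dM) ℂ,
        t = (Matrix.trace
          ((Matrix.single (0 : Fin dS) (0 : Fin dS) (1 : ℂ)
              ⊗ₖ (1 : Matrix (Fin dM) (Fin dM) ℂ))
            * (U * (ρS ⊗ₖ ρM) * Uᴴ))).re}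
      (sumLargestEigs (ρS ⊗ₖ ρM) dM) := by
  classical
  have hdS : 0 < dS := Nat.pos_of_ne_zero (NeZero.ne dS)
  have hdM : 0 < dM := Nat.pos_of_ne_zero (NeZero.ne dM)
  have hmN : dM ≤ dS * dM := Nat.le_mul_of_pos_left dM hdS
  have hherm : (ρS ⊗ₖ ρM).IsHermitian := kron_herm hρS.1 hρM.1
  set d' : (Fin dS × Fin dM) → ℝ := hherm.eigenvalues with hd'
  set e : Fin (dS * dM) ≃ Fin dS × Fin dM := (finProdFinEquiv (m := dS) (n := dM)).symm with he
  set g : Fin (dS * dM) → ℝ := d' ∘ e with hg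
  set σ : Equiv.Perm (Fin (dS * dM)) := Tuple.sort g with hσ
  set v : Fin (dS * dM) → ℝ := fun i => g (σ i.rev) with hvdef
  have hv : Antitone v := by
    intro i j hij
    exact Tuple.monotone_sort g (Fin.rev_le_rev.mpr hij)
  set κ' : Fin (dS * dM) ≃ Fin dS × Fin dM := (Fin.revPerm.trans σ).trans e with hκ'
  have hκ'v : ∀ i, d' (κ' i) = v i := fun i => rfl
  -- multiset identification
  have hmul : Multiset.map d' Finset.univ.val = Multiset.map v Finset.univ.val := by
    have h1 : Multiset.map (⇑κ') Finset.univ.val = Finset.univ.val := by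
      have := congrArg Finset.val (Finset.map_univ_equiv κ')
      simpa [Finset.map_val] using this
    calc Multiset.map d' Finset.univ.val
        = Multiset.map d' (Multiset.map (⇑κ') Finset.univ.val) := by rw [h1]
      _ = Multiset.map (d' ∘ ⇑κ') Finset.univ.val := by rw [Multiset.map_map]
      _ = Multiset.map v Finset.univ.val := Multiset.map_congr rfl (fun i _ => hκ'v i)
  have hSL : sumLargestEigs (ρS ⊗ₖ ρM) dM
      = ∑ j ∈ Finset.univ.filter (fun j : Fin (dS * dM) => (j : ℕ) < dM), v j := by
    have heig : eigsOf (ρS ⊗ₖ ρM) = d' := by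
      unfold eigsOf; rw [dif_pos hherm]
    rw [sumLargestEigs, heig, hmul, sorted_take v hv dM]
  have hSL2 : ∑ j ∈ Finset.univ.filter (fun j : Fin (dS * dM) => (j : ℕ) < dM), v j
      = ∑ b : Fin dM, v (Fin.castLE hmN b) := by
    rw [filter_lt_eq_map hmN, Finset.sum_map]
    simp
  set V : Matrix (Fin dS × Fin dM) (Fin dS × Fin dM) ℂ := (hherm.eigenvectorUnitary : Matrix (Fin dS × Fin dM) (Fin dS × Fin dM) ℂ) with hVdef
  have hV : V ∈ Matrix.unitaryGroup (Fin dS × Fin dM) ℂ := hherm.eigenvectorUnitary.2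
  have hV1 : star V * V = 1 := mem_unitaryGroup_iff'.mp hV
  have hVρV : star V * (ρS ⊗ₖ ρM) * V = Matrix.diagonal ((↑) ∘ d' : (Fin dS × Fin dM) → ℂ) := by
    conv_lhs => rw [hherm.spectral_theorem, Unitary.conjStarAlgAut_apply]
    simp only [← Matrix.mul_assoc, Unitary.coe_star]
    rw [hV1, Matrix.one_mul, Matrix.mul_assoc, hV1, Matrix.mul_one]
    rfl
  constructor
  · -- membership : achieved by U = Vᴴ.submatrix κ id
    set κ : (Fin dS × Fin dM) ≃ (Fin dS × Fin dM) := (finProdFinEquiv (m := dS) (n := dM)).trans κ' with hκdef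
    set U : Matrix (Fin dS × Fin dM) (Fin dS × Fin dM) ℂ := (star V).submatrix ⇑κ id with hUdef
    have hUκ : star U = V.submatrix id ⇑κ := by
      rw [hUdef, star_eq_conjTranspose, star_eq_conjTranspose, conjTranspose_submatrix,
        conjTranspose_conjTranspose]
    have hUmem : U ∈ Matrix.unitaryGroup (Fin dS × Fin dM) ℂ := by
      rw [mem_unitaryGroup_iff, hUκ, hUdef]
      rw [← Matrix.submatrix_mul (star V) V ⇑κ id ⇑κ Function.bijective_id, hV1,
        submatrix_one_equiv]
    refine ⟨U, hUmem, ?_⟩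
    have e1 : U * (ρS ⊗ₖ ρM) = (star V * (ρS ⊗ₖ ρM)).submatrix ⇑κ id := by
      have h := Matrix.submatrix_mul (star V) (ρS ⊗ₖ ρM) ⇑κ id id Function.bijective_id
      rw [Matrix.submatrix_id_id] at h
      rw [hUdef, ← h]
    have hconj : U * (ρS ⊗ₖ ρM) * Uᴴ
        = (Matrix.diagonal ((↑) ∘ d' : (Fin dS × Fin dM) → ℂ)).submatrix ⇑κ ⇑κ := by
      rw [← star_eq_conjTranspose, e1, hUκ,
        ← Matrix.submatrix_mul (star V * (ρS ⊗ₖ ρM)) V ⇑κ id ⇑κ Function.bijective_id, hVρV]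
    have hterm : ∀ b : Fin dM,
        (Matrix.diagonal ((↑) ∘ d' : (Fin dS × Fin dM) → ℂ)).submatrix ⇑κ ⇑κ (0, b) (0, b)
          = ((v (Fin.castLE hmN b) : ℝ) : ℂ) := by
      intro b
      have hκ0b : κ (0, b) = κ' (Fin.castLE hmN b) := by
        have hfp : finProdFinEquiv ((0 : Fin dS), b) = Fin.castLE hmN b := by
          apply Fin.ext
          simp
        rw [hκdef]
        show κ' (finProdFinEquiv (0, b)) = κ' (Fin.castLE hmN b)
        rw [hfp]
      rw [Matrix.submatrix_apply, Matrix.diagonal_apply_eq, Function.comp_apply, hκ0b, hκ'v]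
    rw [hconj, trace_proj, hSL, hSL2,
      Finset.sum_congr rfl (fun b _ => hterm b), ← Complex.ofReal_sum]
    simp
  · -- upper bound
    rintro x ⟨U, hU, rfl⟩
    set W : Matrix (Fin dS × Fin dM) (Fin dS × Fin dM) ℂ := U * V with hWdef
    have hW : W ∈ Matrix.unitaryGroup (Fin dS × Fin dM) ℂ := mul_mem hU hV
    have hW1 : star W * W = 1 := mem_unitaryGroup_iff'.mp hW
    have hW2 : W * star W = 1 := mem_unitaryGroup_iff.mp hW
    have hUρU : U * (ρS ⊗ₖ ρM) * Uᴴ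
        = W * Matrix.diagonal ((↑) ∘ d' : (Fin dS × Fin dM) → ℂ) * star W := by
      rw [← star_eq_conjTranspose, hWdef, StarMul.star_mul]
      conv_lhs => rw [hherm.spectral_theorem, Unitary.conjStarAlgAut_apply]
      simp only [← Matrix.mul_assoc, Unitary.coe_star]
      rfl
    set c : (Fin dS × Fin dM) → ℝ := fun k => ∑ b : Fin dM, Complex.normSq (W (0, b) k) with hc
    have hcol : ∀ k, ∑ p : Fin dS × Fin dM, Complex.normSq (W p k) = 1 := by
      intro k
      have h := congrFun (congrFun hW1 k) k
      rw [Matrix.mul_apply, Matrix.one_apply_eq] at h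
      have h2 : ∀ p, (star W) k p * W p k = ((Complex.normSq (W p k) : ℝ) : ℂ) := by
        intro p
        rw [star_eq_conjTranspose, Matrix.conjTranspose_apply, mul_comm, Complex.star_def,
          Complex.mul_conj]
      rw [Finset.sum_congr rfl (fun p _ => h2 p), ← Complex.ofReal_sum] at h
      exact_mod_cast h
    have hrow : ∀ p, ∑ k : Fin dS × Fin dM, Complex.normSq (W p k) = 1 := by
      intro p
      have h := congrFun (congrFun hW2 p) p
      rw [Matrix.mul_apply, Matrix.one_apply_eq] at h
      have h2 : ∀ k, W p k * (star W) k p = ((Complex.normSq (W p k) : ℝ) : ℂ) := by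
        intro k
        rw [star_eq_conjTranspose, Matrix.conjTranspose_apply, Complex.star_def,
          Complex.mul_conj]
      rw [Finset.sum_congr rfl (fun k _ => h2 k), ← Complex.ofReal_sum] at h
      exact_mod_cast h
    have hentry : ∀ p, ((U * (ρS ⊗ₖ ρM) * Uᴴ) p p).re
        = ∑ k, d' k * Complex.normSq (W p k) := by
      intro p
      rw [hUρU, Matrix.mul_apply, Complex.re_sum]
      refine Finset.sum_congr rfl fun j _ => ?_
      simp only [Matrix.mul_diagonal, Matrix.star_apply, Function.comp_apply]
      have h3 : W p j * (↑(d' j) : ℂ) * star (W p j)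
          = ((d' j * Complex.normSq (W p j) : ℝ) : ℂ) := by
        rw [mul_comm (W p j) _, mul_assoc, Complex.star_def, Complex.mul_conj,
          Complex.ofReal_mul]
      rw [h3, Complex.ofReal_re]
    have hval : (Matrix.trace
          ((Matrix.single (0 : Fin dS) (0 : Fin dS) (1 : ℂ)
              ⊗ₖ (1 : Matrix (Fin dM) (Fin dM) ℂ))
            * (U * (ρS ⊗ₖ ρM) * Uᴴ))).re = ∑ k, d' k * c k := by
      rw [trace_proj, Complex.re_sum, Finset.sum_congr rfl (fun b _ => hentry (0, b)),
        Finset.sum_comm]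
      exact Finset.sum_congr rfl fun k _ => by rw [hc, Finset.mul_sum]
    rw [hval, hSL]
    have hre : ∑ k, d' k * c k = ∑ i : Fin (dS * dM), v i * c (κ' i) := by
      rw [← Equiv.sum_comp κ' (fun k => d' k * c k)]
      exact Finset.sum_congr rfl fun i _ => by rw [hκ'v]
    rw [hre]
    refine kyfan_bound hdM hmN v hv (fun i => c (κ' i)) ?_ ?_ ?_
    · intro i
      exact Finset.sum_nonneg fun b _ => Complex.normSq_nonneg _
    · intro i
      have h1 : c (κ' i) ≤ ∑ p : Fin dS × Fin dM, Complex.normSq (W p (κ' i)) := by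
        rw [Fintype.sum_prod_type]
        exact Finset.single_le_sum
          (f := fun a => ∑ b : Fin dM, Complex.normSq (W (a, b) (κ' i)))
          (fun a _ => Finset.sum_nonneg fun b _ => Complex.normSq_nonneg _)
          (Finset.mem_univ (0 : Fin dS))
      rw [hcol] at h1
      exact h1
    · rw [Equiv.sum_comp κ' c]
      have : ∑ k, c k = ∑ b : Fin dM, ∑ k : Fin dS × Fin dM, Complex.normSq (W (0, b) k) := by
        rw [Finset.sum_comm]
      rw [this, Finset.sum_congr rfl (fun b _ => hrow (0, b))]
      simp
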